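/- The lattice counting zeta function of ℤ^n equals the product of shifted Riemann zeta functions: ∑_{L ⊆ ℤ^n, finite index} [ℤ^n : L]^{-s} = ζ(s)·ζ(s-1)···ζ(s-n+1) for Re(s) > n. -/

import Mathlib

open AddSubgroup QuotientAddGroup

variable {H : Type*} [AddCommGroup H]

/-- The subgroup of `ℤ × H` determined by `(d, L', x)`. -/
def latShift (d : ℕ+) (L' : AddSubgroup H) (x : H ⧸ L') : AddSubgroup (ℤ × H) :=
  ((QuotientAddGroup.mk' (zmultiples (((d : ℕ) : ℤ), x))).comp
    ((AddMonoidHom.id ℤ).prodMap (QuotientAddGroup.mk' L'))).ker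

lemma mem_latShift {d : ℕ+} {L' : AddSubgroup H} {x : H ⧸ L'} {a : ℤ} {h : H} :
    (a, h) ∈ latShift d L' x ↔ ∃ k : ℤ, a = k * d ∧ (h : H ⧸ L') = k • x := by
  simp only [latShift, AddMonoidHom.mem_ker, AddMonoidHom.comp_apply,
    AddMonoidHom.coe_prodMap, Prod.map_apply, AddMonoidHom.id_apply, QuotientAddGroup.mk'_apply,
    QuotientAddGroup.eq_zero_iff, mem_zmultiples_iff, Prod.ext_iff, Prod.smul_mk,
    smul_eq_mul]
  constructor
  · rintro ⟨k, hk1, hk2⟩; exact ⟨k, hk1.symm, hk2.symm⟩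
  · rintro ⟨k, hk1, hk2⟩; exact ⟨k, hk1.symm, hk2.symm⟩

lemma card_quot_zmultiples (d : ℕ+) {Q : Type*} [AddCommGroup Q] (x : Q) :
    Nat.card ((ℤ × Q) ⧸ zmultiples (((d : ℕ) : ℤ), x)) = d * Nat.card Q := by
  haveI : NeZero (d : ℕ) := ⟨d.ne_zero⟩
  have e : ZMod d × Q ≃ (ℤ × Q) ⧸ zmultiples (((d : ℕ) : ℤ), x) := by
    refine Equiv.ofBijective (fun p => QuotientAddGroup.mk (((p.1.val : ℤ)), p.2)) ⟨?_, ?_⟩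
    · rintro ⟨a, q⟩ ⟨b, r⟩ hab
      rw [QuotientAddGroup.eq, mem_zmultiples_iff] at hab
      obtain ⟨k, hk⟩ := hab
      rw [Prod.ext_iff] at hk
      obtain ⟨hk1, hk2⟩ := hk
      simp only [Prod.smul_fst, Prod.smul_snd, Prod.fst_add, Prod.fst_neg, Prod.snd_add,
        Prod.snd_neg, smul_eq_mul] at hk1 hk2
      have hd : (0:ℤ) < (d:ℕ) := by exact_mod_cast d.pos
      have hav : (a.val : ℤ) < (d:ℕ) := by exact_mod_cast a.val_lt
      have hbv : (b.val : ℤ) < (d:ℕ) := by exact_mod_cast b.val_lt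
      have hk0 : k = 0 := by nlinarith [Int.natCast_nonneg a.val, Int.natCast_nonneg b.val]
      subst hk0
      simp only [zero_mul, zero_smul] at hk1 hk2
      have hab : a = b := by
        refine ZMod.val_injective _ ?_
        have : (a.val : ℤ) = b.val := by linarith
        exact_mod_cast this
      have hqr : q = r := neg_add_eq_zero.mp hk2.symm
      rw [hab, hqr]
    · rintro ⟨⟨m, q⟩⟩
      refine ⟨⟨(m : ZMod d), q - (m / ((d:ℕ):ℤ)) • x⟩, ?_⟩
      show QuotientAddGroup.mk _ = QuotientAddGroup.mk _
      rw [QuotientAddGroup.eq, mem_zmultiples_iff]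
      refine ⟨m / ((d:ℕ):ℤ), ?_⟩
      have hmod : ((m : ZMod d).val : ℤ) = m % (d:ℕ) := ZMod.val_intCast m
      ext
      · simp only [Prod.smul_fst, Prod.fst_add, Prod.fst_neg, smul_eq_mul]
        rw [hmod]
        have := Int.mul_ediv_add_emod m ((d:ℕ):ℤ)
        linarith
      · simp only [Prod.smul_snd, Prod.snd_add, Prod.snd_neg]
        abel
  rw [← Nat.card_congr e, Nat.card_prod, Nat.card_zmod]

lemma latShift_surj (d : ℕ+) (L' : AddSubgroup H) (x : H ⧸ L') :
    Function.Surjective ⇑((QuotientAddGroup.mk' (zmultiples (((d : ℕ) : ℤ), x))).comp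
      ((AddMonoidHom.id ℤ).prodMap (QuotientAddGroup.mk' L'))) := by
  refine (QuotientAddGroup.mk'_surjective _).comp ?_
  rw [AddMonoidHom.coe_prodMap]
  exact Function.Surjective.prodMap Function.surjective_id (QuotientAddGroup.mk'_surjective _)

lemma index_latShift (d : ℕ+) (L' : AddSubgroup H) (x : H ⧸ L') :
    (latShift d L' x).index = d * L'.index := by
  rw [latShift, AddSubgroup.index_ker, AddMonoidHom.range_eq_top_of_surjective _ (latShift_surj d L' x)]
  rw [Nat.card_congr AddSubgroup.topEquiv.toEquiv, card_quot_zmultiples d x]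
  rfl

abbrev FI (A : Type*) [AddGroup A] : Type _ := {L : AddSubgroup A // L.index ≠ 0}

variable (H) in
def LatT : Type _ := Σ d : ℕ+, Σ L' : FI H, H ⧸ L'.1

def latMap : LatT H → FI (ℤ × H) :=
  fun t => ⟨latShift t.1 t.2.1.1 t.2.2, by
    rw [index_latShift]; exact Nat.mul_ne_zero t.1.ne_zero t.2.1.2⟩

lemma out_mem_latShift (d : ℕ+) (L' : AddSubgroup H) (x : H ⧸ L') :
    (((d:ℕ):ℤ), x.out) ∈ latShift d L' x := by
  rw [mem_latShift]
  exact ⟨1, by ring, by rw [one_smul]; exact Quotient.out_eq' x⟩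

lemma latMap_injective : Function.Injective (latMap (H := H)) := by
  rintro ⟨d, L, x⟩ ⟨e, M, y⟩ hEq
  have hS : latShift d L.1 x = latShift e M.1 y := congrArg Subtype.val hEq
  -- d = e
  have hde : d = e := by
    have h1 := out_mem_latShift d L.1 x
    rw [hS, mem_latShift] at h1
    have h2 := out_mem_latShift e M.1 y
    rw [← hS, mem_latShift] at h2
    obtain ⟨k, hk, -⟩ := h1
    obtain ⟨j, hj, -⟩ := h2
    have hkd : (e:ℕ) ∣ (d:ℕ) := by
      have : ((e:ℕ):ℤ) ∣ ((d:ℕ):ℤ) := ⟨k, by linarith⟩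
      exact_mod_cast this
    have hjd : (d:ℕ) ∣ (e:ℕ) := by
      have : ((d:ℕ):ℤ) ∣ ((e:ℕ):ℤ) := ⟨j, by linarith⟩
      exact_mod_cast this
    exact PNat.coe_injective (Nat.dvd_antisymm hjd hkd)
  subst hde
  -- L = M
  have hLM : L = M := by
    refine Subtype.ext (SetLike.ext fun h => ?_)
    have e1 : ∀ (N : AddSubgroup H) (z : H ⧸ N), (h ∈ N ↔ (0, h) ∈ latShift d N z) := by
      intro N z
      rw [mem_latShift]
      constructor
      · intro hh
        exact ⟨0, by ring, by rwa [zero_smul, QuotientAddGroup.eq_zero_iff]⟩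
      · rintro ⟨k, hk, hx⟩
        have hk0 : k = 0 := by
          have hd : (0:ℤ) < (d:ℕ) := by exact_mod_cast d.pos
          nlinarith
        subst hk0
        rw [zero_smul, QuotientAddGroup.eq_zero_iff] at hx
        exact hx
    rw [e1 L.1 x, e1 M.1 y, hS]
  subst hLM
  -- x = y
  have hxy : x = y := by
    have h1 := out_mem_latShift d L.1 x
    rw [hS, mem_latShift] at h1
    obtain ⟨k, hk, hx⟩ := h1
    have hk1 : k = 1 := by
      have hd : (0:ℤ) < (d:ℕ) := by exact_mod_cast d.pos
      nlinarith
    subst hk1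
    rw [one_smul] at hx
    exact (Quotient.out_eq' x).symm.trans hx
  rw [hxy]

lemma latMap_surjective : Function.Surjective (latMap (H := H)) := by
  rintro ⟨L, hL⟩
  -- the image in ℤ
  set J : AddSubgroup ℤ := L.map (AddMonoidHom.fst ℤ H) with hJ
  have hJind : J.index ≠ 0 := by
    have h1 : (J.comap (AddMonoidHom.fst ℤ H)).index = J.index :=
      AddSubgroup.index_comap_of_surjective _ Prod.fst_surjective
    have h2 : L ≤ J.comap (AddMonoidHom.fst ℤ H) := fun p hp => AddSubgroup.mem_map_of_mem _ hp
    intro h0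
    exact hL (Nat.eq_zero_of_zero_dvd (h0 ▸ h1 ▸ AddSubgroup.index_dvd_of_le h2))
  obtain ⟨a, haJ⟩ := Int.subgroup_cyclic J
  rw [← AddSubgroup.zmultiples_eq_closure, ← Int.zmultiples_natAbs] at haJ
  have hind : J.index = a.natAbs := by rw [haJ, Int.index_zmultiples, Int.natAbs_natCast]
  have hdpos : 0 < a.natAbs := Nat.pos_of_ne_zero (by rw [← hind]; exact hJind)
  set d : ℕ+ := ⟨a.natAbs, hdpos⟩ with hd
  have hcast : ((a.natAbs : ℕ) : ℤ) = ((d:ℕ) : ℤ) := rfl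
  rw [hcast] at haJ
  -- a lift of d
  have hdJ : ((d:ℕ):ℤ) ∈ J := by rw [haJ]; exact AddSubgroup.mem_zmultiples _
  obtain ⟨⟨a', h⟩, hmemL, hfst⟩ := hdJ
  simp only [AddMonoidHom.coe_fst] at hfst
  subst hfst
  -- the subgroup of H
  set L' : AddSubgroup H := L.comap (AddMonoidHom.inr ℤ H) with hL'
  have hmemL' : ∀ k : H, k ∈ L' ↔ ((0 : ℤ), k) ∈ L := fun k => Iff.rfl
  have hL'ind : L'.index ≠ 0 := by
    rw [hL', AddSubgroup.index_comap]
    intro h0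
    exact hL (Nat.eq_zero_of_zero_dvd (h0 ▸ AddSubgroup.relIndex_dvd_index_of_normal L _))
  refine ⟨⟨d, ⟨L', hL'ind⟩, QuotientAddGroup.mk h⟩, Subtype.ext ?_⟩
  show latShift d L' (QuotientAddGroup.mk h) = L
  ext ⟨b, k⟩
  rw [mem_latShift]
  constructor
  · rintro ⟨m, hb, hk⟩
    have hk' : k - m • h ∈ L' := by
      rw [← QuotientAddGroup.eq_zero_iff]
      have : ((k - m • h : H) : H ⧸ L') = (k : H ⧸ L') - m • (h : H ⧸ L') := by
        rw [QuotientAddGroup.mk_sub, QuotientAddGroup.mk_zsmul]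
      rw [this, hk, sub_self]
    have hmem1 : ((0 : ℤ), k - m • h) ∈ L := (hmemL' _).mp hk'
    have hmem2 : m • ((((d:ℕ):ℤ)), h) ∈ L := zsmul_mem hmemL m
    have : (b, k) = m • ((((d:ℕ):ℤ)), h) + ((0 : ℤ), k - m • h) := by
      ext
      · simp only [Prod.smul_fst, Prod.fst_add, smul_eq_mul]
        rw [hb]; ring
      · simp only [Prod.smul_snd, Prod.snd_add]
        abel
    rw [this]
    exact add_mem hmem2 hmem1
  · intro hbk
    have hbJ : b ∈ J := ⟨(b, k), hbk, rfl⟩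
    rw [haJ, AddSubgroup.mem_zmultiples_iff] at hbJ
    obtain ⟨m, hm⟩ := hbJ
    refine ⟨m, by rw [← hm, smul_eq_mul], ?_⟩
    have hmem2 : m • ((((d:ℕ):ℤ)), h) ∈ L := zsmul_mem hmemL m
    have hdiff : ((0 : ℤ), k - m • h) ∈ L := by
      have : ((0 : ℤ), k - m • h) = (b, k) - m • ((((d:ℕ):ℤ)), h) := by
        ext
        · simp only [Prod.smul_fst, Prod.fst_sub, smul_eq_mul]
          rw [← hm, smul_eq_mul]; ring
        · simp only [Prod.smul_snd, Prod.snd_sub]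
      rw [this]
      exact sub_mem hbk hmem2
    have hk' : k - m • h ∈ L' := (hmemL' _).mpr hdiff
    rw [← QuotientAddGroup.eq_zero_iff] at hk'
    have : ((k - m • h : H) : H ⧸ L') = (k : H ⧸ L') - m • (h : H ⧸ L') := by
        rw [QuotientAddGroup.mk_sub, QuotientAddGroup.mk_zsmul]
    rw [this, sub_eq_zero] at hk'
    exact hk'

def fiComap {A B : Type*} [AddGroup A] [AddGroup B] (e : A ≃+ B) : FI B ≃ FI A where
  toFun L := ⟨L.1.comap e.toAddMonoidHom,
    by rw [AddSubgroup.index_comap_of_surjective _ e.surjective]; exact L.2⟩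
  invFun L := ⟨L.1.comap e.symm.toAddMonoidHom,
    by rw [AddSubgroup.index_comap_of_surjective _ e.symm.surjective]; exact L.2⟩
  left_inv L := by
    refine Subtype.ext (SetLike.ext fun x => ?_)
    simp [AddSubgroup.mem_comap]
  right_inv L := by
    refine Subtype.ext (SetLike.ext fun x => ?_)
    simp [AddSubgroup.mem_comap]

lemma fiComap_index {A B : Type*} [AddGroup A] [AddGroup B] (e : A ≃+ B) (L : FI B) :
    ((fiComap e L).1).index = L.1.index :=
  AddSubgroup.index_comap_of_surjective _ e.surjective

def pie (n : ℕ) : (Fin (n+1) → ℤ) ≃+ ℤ × (Fin n → ℤ) :=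
  { (Fin.consEquiv fun _ : Fin (n+1) => ℤ).symm with map_add' := fun _ _ => rfl }

lemma norm_nat_cpow (m : ℕ) (hm : m ≠ 0) (w : ℂ) : ‖(m:ℂ) ^ w‖ = (m:ℝ) ^ w.re := by
  have h0 : (0:ℝ) < m := by positivity
  rw [show ((m:ℂ)) = ((m:ℝ):ℂ) by norm_num,
    Complex.norm_cpow_eq_rpow_re_of_pos h0]

lemma zeta_hasSum_pnat {s : ℂ} (hs : 1 < s.re) :
    HasSum (fun d : ℕ+ => ((d:ℕ):ℂ) ^ (-s)) (riemannZeta s) := by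
  have hsum : Summable (fun k : ℕ => 1 / ((k:ℂ) + 1) ^ s) := by
    have h1 : Summable (fun k : ℕ => 1 / ((k:ℂ)) ^ s) := Complex.summable_one_div_nat_cpow.mpr hs
    have h2 := (summable_nat_add_iff 1).mpr h1
    refine h2.congr fun k => ?_
    push_cast
    ring_nf
  have hzeta : HasSum (fun k : ℕ => 1 / ((k:ℂ) + 1) ^ s) (riemannZeta s) :=
    hsum.hasSum_iff.mpr (zeta_eq_tsum_one_div_nat_add_one_cpow hs).symm
  have he : ∀ k : ℕ, ((Equiv.pnatEquivNat.symm k : ℕ+) : ℕ) = k + 1 := by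
    intro k; rfl
  refine (Equiv.pnatEquivNat.symm.hasSum_iff).mp ?_
  have hfun : ((fun d : ℕ+ => ((d:ℕ):ℂ) ^ (-s)) ∘ ⇑Equiv.pnatEquivNat.symm)
      = fun k : ℕ => 1 / ((k:ℂ) + 1) ^ s := by
    funext k
    simp only [Function.comp_apply, he k]
    push_cast
    rw [Complex.cpow_neg, one_div]
  rw [hfun]
  exact hzeta

set_option maxHeartbeats 1000000 in
theorem lat_hasSum : ∀ (n : ℕ) (s : ℂ), (n : ℝ) < s.re →
    HasSum (fun L : FI (Fin n → ℤ) => ((L.1.index : ℂ)) ^ (-s))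
      (∏ k ∈ Finset.range n, riemannZeta (s - k)) := by
  intro n
  induction n with
  | zero =>
    intro s hs
    have hu : ∀ L : FI (Fin 0 → ℤ), L = ⟨⊤, by simp⟩ := by
      rintro ⟨L, hL⟩
      refine Subtype.ext (SetLike.ext fun x => ?_)
      simp only [AddSubgroup.mem_top, iff_true]
      have hx : x = 0 := Subsingleton.elim x 0
      rw [hx]; exact zero_mem L
    letI : Unique (FI (Fin 0 → ℤ)) := ⟨⟨⟨⊤, by simp⟩⟩, hu⟩
    have h := hasSum_fintype (fun L : FI (Fin 0 → ℤ) => ((L.1.index : ℂ)) ^ (-s))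
    have hval : ∑ L : FI (Fin 0 → ℤ), ((L.1.index : ℂ)) ^ (-s) = 1 := by
      rw [Fintype.sum_unique]
      have hdef : (default : FI (Fin 0 → ℤ)).1 = ⊤ := rfl
      rw [hdef, AddSubgroup.index_top, Nat.cast_one, Complex.one_cpow]
    rw [hval] at h
    simpa using h
  | succ n IH =>
    intro s hs
    have hcast : ((n + 1 : ℕ) : ℝ) = (n : ℝ) + 1 := by push_cast; ring
    rw [hcast] at hs
    have hσ1 : 1 < s.re := by nlinarith [Nat.cast_nonneg (α := ℝ) n]
    have hsIH : (n : ℝ) < (s - 1).re := by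
      rw [Complex.sub_re, Complex.one_re]; linarith
    have hz := zeta_hasSum_pnat hσ1
    have hIH := IH (s - 1) hsIH
    set H := (Fin n → ℤ) with hH
    set P := ∏ k ∈ Finset.range n, riemannZeta (s - 1 - k) with hP
    -- norm summability
    have hznorm : Summable (fun d : ℕ+ => ‖((d:ℕ):ℂ) ^ (-s)‖) :=
      summable_norm_iff.mpr hz.summable
    have hIHnorm : Summable (fun L : FI H => ‖((L.1.index : ℂ)) ^ (-(s-1))‖) :=
      summable_norm_iff.mpr hIH.summable
    -- product sum
    have hprodsum := summable_mul_of_summable_norm hznorm hIHnorm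
    have hgsum := HasSum.mul hz hIH hprodsum
    -- fiber facts
    have hfin : ∀ p : ℕ+ × FI H, Finite (H ⧸ p.2.1) := by
      intro p
      exact Nat.finite_of_card_ne_zero p.2.2
    set F : (Σ p : ℕ+ × FI H, H ⧸ p.2.1) → ℂ :=
      fun q => (((q.1.1 : ℕ) * q.1.2.1.index : ℕ) : ℂ) ^ (-s) with hF
    have hfiber : ∀ p : ℕ+ × FI H, HasSum (fun x : H ⧸ p.2.1 => F ⟨p, x⟩)
        (((p.1:ℕ):ℂ) ^ (-s) * ((p.2.1.index : ℂ)) ^ (-(s-1))) := by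
      rintro ⟨d, L'⟩
      haveI := hfin (d, L')
      haveI : Fintype (H ⧸ L'.1) := Fintype.ofFinite _
      have h1 := hasSum_fintype (fun _ : H ⧸ L'.1 =>
        (((d : ℕ) * L'.1.index : ℕ) : ℂ) ^ (-s))
      rw [Finset.sum_const, Finset.card_univ] at h1
      have hcard : Fintype.card (H ⧸ L'.1) = L'.1.index := by
        rw [← Nat.card_eq_fintype_card]; rfl
      rw [hcard] at h1
      have hm : L'.1.index ≠ 0 := L'.2
      have hsplit : (((d : ℕ) * L'.1.index : ℕ) : ℂ) ^ (-s)
          = ((d:ℕ):ℂ) ^ (-s) * ((L'.1.index : ℕ):ℂ) ^ (-s) := by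
        have h2 := Complex.mul_cpow_ofReal_nonneg
          (a := ((d:ℕ):ℝ)) (b := ((L'.1.index : ℕ):ℝ))
          (by positivity) (by positivity) (-s)
        push_cast at h2 ⊢
        exact h2
      have hmm : ((L'.1.index : ℕ):ℂ) ^ (-(s-1))
          = ((L'.1.index : ℕ):ℂ) * ((L'.1.index : ℕ):ℂ) ^ (-s) := by
        have hmne : ((L'.1.index : ℕ):ℂ) ≠ 0 := Nat.cast_ne_zero.mpr hm
        rw [show -(s-1) = 1 + (-s) by ring, Complex.cpow_add _ _ hmne, Complex.cpow_one]
      have hval : (L'.1.index : ℕ) • ((((d : ℕ) * L'.1.index : ℕ) : ℂ) ^ (-s))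
          = ((d:ℕ):ℂ) ^ (-s) * ((L'.1.index : ℂ)) ^ (-(s-1)) := by
        rw [nsmul_eq_mul, hsplit, hmm]
        ring
      rw [hval] at h1
      exact h1
    -- summability of F via norms
    have hFnorm : Summable (fun q => ‖F q‖) := by
      refine (summable_sigma_of_nonneg (fun q => norm_nonneg _)).mpr ⟨?_, ?_⟩
      · intro p
        haveI := hfin p
        exact Summable.of_finite
      · have hfun : (fun p : ℕ+ × FI H => ∑' x : H ⧸ p.2.1, ‖F ⟨p, x⟩‖)
            = fun p : ℕ+ × FI H => ‖((p.1:ℕ):ℂ) ^ (-s) * ((p.2.1.index : ℂ)) ^ (-(s-1))‖ := by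
          funext p
          obtain ⟨d, L'⟩ := p
          haveI := hfin (d, L')
          have hm : L'.1.index ≠ 0 := L'.2
          show (∑' _ : H ⧸ L'.1, ‖(((d:ℕ) * L'.1.index : ℕ):ℂ) ^ (-s)‖) = _
          rw [tsum_const]
          rw [norm_nat_cpow _ (Nat.mul_ne_zero d.ne_zero hm), norm_mul,
              norm_nat_cpow _ d.ne_zero, norm_nat_cpow _ hm]
          have hcard : Nat.card (H ⧸ L'.1) = L'.1.index := rfl
          rw [hcard, nsmul_eq_mul]
          rw [Complex.neg_re, Complex.neg_re, Complex.sub_re, Complex.one_re]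
          push_cast
          rw [Real.mul_rpow (by positivity) (by positivity)]
          have hmpos : (0:ℝ) < (L'.1.index : ℝ) := by
            exact_mod_cast Nat.pos_of_ne_zero hm
          rw [show -(s.re - 1) = 1 + (-s.re) by ring, Real.rpow_add hmpos, Real.rpow_one]
          ring
        rw [hfun]
        exact summable_norm_iff.mpr hgsum.summable
    have hFsummable : Summable F := hFnorm.of_norm
    have hsig := hFsummable.hasSum.sigma hfiber
    have hFval : HasSum F (riemannZeta s * P) := by
      rw [← hsig.unique hgsum]
      exact hFsummable.hasSum
    -- reindexing
    let E4 : (Σ p : ℕ+ × FI H, H ⧸ p.2.1) ≃ LatT H :=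
      { toFun := fun q => ⟨q.1.1, q.1.2, q.2⟩
        invFun := fun t => ⟨(t.1, t.2.1), t.2.2⟩
        left_inv := fun ⟨⟨d, L'⟩, x⟩ => rfl
        right_inv := fun ⟨d, L', x⟩ => rfl }
    let E2 : LatT H ≃ FI (ℤ × H) :=
      Equiv.ofBijective latMap ⟨latMap_injective, latMap_surjective⟩
    let E1 : FI (ℤ × H) ≃ FI (Fin (n+1) → ℤ) := fiComap (pie n)
    have hcomp : ((fun L : FI (Fin (n+1) → ℤ) => ((L.1.index : ℂ)) ^ (-s)) ∘
        ⇑((E4.trans E2).trans E1)) = F := by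
      funext q
      obtain ⟨⟨d, L'⟩, x⟩ := q
      simp only [Function.comp_apply, Equiv.trans_apply]
      have h1 : (E1 (E2 (E4 ⟨(d, L'), x⟩))).1.index
          = (E2 (E4 ⟨(d, L'), x⟩)).1.index := fiComap_index _ _
      rw [h1]
      have h2 : (E2 (E4 ⟨(d, L'), x⟩)).1.index = (d:ℕ) * L'.1.index := by
        show (latShift d L'.1 x).index = _
        rw [index_latShift]
      rw [h2]
    have htarget : HasSum (fun L : FI (Fin (n+1) → ℤ) => ((L.1.index : ℂ)) ^ (-s))
        (riemannZeta s * P) := by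
      refine (((E4.trans E2).trans E1).hasSum_iff).mp ?_
      rw [hcomp]
      exact hFval
    have hprod : ∏ k ∈ Finset.range (n+1), riemannZeta (s - k) = riemannZeta s * P := by
      rw [Finset.prod_range_succ', Nat.cast_zero, sub_zero, mul_comm]
      congr 1
      refine Finset.prod_congr rfl fun k _ => ?_
      congr 1
      push_cast
      ring
    rw [hprod]
    exact htarget

/-- The lattice counting zeta function of `ℤ^n`: the sum of `[ℤ^n : L]^{-s}` over all
finite-index subgroups `L` of `ℤ^n` equals `ζ(s)·ζ(s-1)···ζ(s-n+1)` for `Re(s) > n`. -/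
theorem zeta_of_int_lattice (n : ℕ) (hn : 1 ≤ n) (s : ℂ) (hs : (n : ℝ) < s.re) :
    ∑' L : {L : AddSubgroup (Fin n → ℤ) // L.index ≠ 0},
        ((L : AddSubgroup (Fin n → ℤ)).index : ℂ) ^ (-s)
      = ∏ k ∈ Finset.range n, riemannZeta (s - k) :=
  (lat_hasSum n s hs).tsum_eq
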